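/- Let P0 > 0 and P1 ≥ P0 + 1. For every β ∈ [0,1], setting P̃1 = βP0 + 1 (which satisfies P̃1 ≤ P1) and α = 2βP0/(βP0 + P̃1 + 1), one has (1/2)log(1 + (1−β)P0/(βP0+1)) + (1/2)log(1 + P̃1/(1+(1−1/α)²βP0)) = (1/2)log(1+P0) when β > 0; hence every point on the line R0 + R1 = (1/2)log(1+P0) with R0, R1 ≥ 0 is achieved by the inner bound of Proposition 3. -/

import Mathlib

lemma denom_eq (β P0 : ℝ) (hb : 0 < β*P0) :
    1 + (β*P0 + 1) / (1 + (1 - 1/(2*β*P0 / (β*P0 + (β*P0 + 1) + 1)))^2 * β * P0)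
      = 1 + β*P0 := by
  set b := β*P0 with hbdef
  have hb1 : b + 1 ≠ 0 := by positivity
  have h2b : (2:ℝ)*b + 2 ≠ 0 := by positivity
  have e1 : 2*β*P0 / (β*P0 + (β*P0 + 1) + 1) = b/(b+1) := by
    rw [div_eq_div_iff (by positivity) hb1, hbdef]; ring
  rw [e1]
  have hbne : β*P0 ≠ 0 := by rw [← hbdef]; exact hb.ne'
  have e2 : (1 - 1/(b/(b+1)))^2 * β * P0 = 1/b := by
    rw [one_div_div, hbdef]
    have hβ : β ≠ 0 := left_ne_zero_of_mul hbne
    have hP : P0 ≠ 0 := right_ne_zero_of_mul hbne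
    field_simp; ring
  rw [e2]
  have e3 : (1:ℝ) + 1/b = (b+1)/b := by field_simp
  rw [e3]
  rw [div_div_eq_mul_div, mul_comm, mul_div_assoc, div_self hb1, mul_one]

lemma first_eq (β P0 : ℝ) (hP0 : 0 < P0) (hb : -1 < β*P0) :
    1 + (1-β)*P0 / (β*P0 + 1) = (1 + P0)/(β*P0 + 1) := by
  have h1 : β*P0 + 1 ≠ 0 := by linarith
  field_simp; ring

lemma sum_eq (β P0 : ℝ) (hP0 : 0 < P0) (hb : 0 < β*P0) :
    (1/2) * Real.log (1 + (1-β)*P0 / (β*P0 + 1))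
      + (1/2) * Real.log (1 + (β*P0 + 1) /
          (1 + (1 - 1/(2*β*P0 / (β*P0 + (β*P0 + 1) + 1)))^2 * β * P0))
    = (1/2) * Real.log (1 + P0) := by
  rw [denom_eq β P0 hb, first_eq β P0 hP0 (by linarith)]
  rw [Real.log_div (by positivity) (by positivity)]
  have : (1:ℝ) + β*P0 = β*P0 + 1 := by ring
  rw [this]; ring

theorem stmt3 (P0 P1 : ℝ) (hP0 : 0 < P0) (hP1 : P0 + 1 ≤ P1) :
    (∀ β ∈ Set.Icc (0:ℝ) 1,
      β*P0 + 1 ≤ P1 ∧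
      (0 < β →
        (1/2) * Real.log (1 + (1-β)*P0 / (β*P0 + 1))
          + (1/2) * Real.log (1 + (β*P0 + 1) /
              (1 + (1 - 1/(2*β*P0 / (β*P0 + (β*P0 + 1) + 1)))^2 * β * P0))
        = (1/2) * Real.log (1 + P0))) ∧
    (∀ R0 R1 : ℝ, 0 ≤ R0 → 0 ≤ R1 → R0 + R1 = (1/2) * Real.log (1 + P0) →
      ∃ β ∈ Set.Icc (0:ℝ) 1,
        R0 = (1/2) * Real.log (1 + (1-β)*P0 / (β*P0 + 1)) ∧
        (0 < β →
          R1 = (1/2) * Real.log (1 + (β*P0 + 1) /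
              (1 + (1 - 1/(2*β*P0 / (β*P0 + (β*P0 + 1) + 1)))^2 * β * P0)))) := by
  constructor
  · intro β hβ
    obtain ⟨hβ0, hβ1⟩ := hβ
    refine ⟨?_, fun hβpos => sum_eq β P0 hP0 (by positivity)⟩
    nlinarith
  · intro R0 R1 hR0 hR1 hsum
    have hC : R0 ≤ (1/2) * Real.log (1 + P0) := by linarith
    set β := ((1+P0) * Real.exp (-(2*R0)) - 1)/P0 with hβdef
    have hexp : Real.exp (-(2*R0)) ≤ 1 := by
      rw [Real.exp_le_one_iff]; linarith
    have hlog : Real.log (1+P0) ≤ 2 * ((1/2) * Real.log (1+P0)) := by ring_nf; simp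
    have hexplow : 1/(1+P0) ≤ Real.exp (-(2*R0)) := by
      rw [one_div, ← Real.exp_log (show (0:ℝ) < 1+P0 by linarith), ← Real.exp_neg,
        Real.exp_le_exp]
      linarith
    have hβP0 : β * P0 = (1+P0) * Real.exp (-(2*R0)) - 1 := by
      rw [hβdef]; field_simp
    have hkey : 1 + β*P0 = (1+P0) * Real.exp (-(2*R0)) := by rw [hβP0]; ring
    have hβ0 : 0 ≤ β := by
      rw [hβdef]
      apply div_nonneg _ hP0.le
      have : (1:ℝ) ≤ (1+P0) * Real.exp (-(2*R0)) := by
        calc (1:ℝ) = (1+P0) * (1/(1+P0)) := by field_simp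
        _ ≤ (1+P0) * Real.exp (-(2*R0)) := by
            apply mul_le_mul_of_nonneg_left hexplow (by linarith)
      linarith
    have hβ1 : β ≤ 1 := by
      rw [hβdef, div_le_one hP0]
      nlinarith [Real.exp_pos (-(2*R0))]
    have hpos : 0 < 1 + β*P0 := by rw [hkey]; positivity
    have hR0eq : R0 = (1/2) * Real.log (1 + (1-β)*P0 / (β*P0 + 1)) := by
      rw [first_eq β P0 hP0 (by linarith)]
      have : β*P0 + 1 = 1 + β*P0 := by ring
      rw [this, Real.log_div (by positivity) (by positivity), hkey,
        Real.log_mul (by positivity) (Real.exp_ne_zero _), Real.log_exp]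
      ring
    refine ⟨β, ⟨hβ0, hβ1⟩, hR0eq, fun hβpos => ?_⟩
    have hb : 0 < β*P0 := by positivity
    have := sum_eq β P0 hP0 hb
    rw [← hR0eq] at this
    linarith
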